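/- Let F : ℝⁿ → ℝⁿ be locally Lipschitz, let b : ℝⁿ → ℝ be continuously differentiable, and let α : ℝ → ℝ be a locally Lipschitz class K function (strictly increasing with α(0) = 0). Suppose ⟨∇b(x), F(x)⟩ + α(b(x)) ≥ 0 for all x ∈ ℝⁿ. Then the set C = {x ∈ ℝⁿ : b(x) ≥ 0} is forward invariant for ẋ = F(x): for every solution x : [0,T] → ℝⁿ of ẋ(t) = F(x(t)) with b(x(0)) ≥ 0, one has b(x(t)) ≥ 0 for all t ∈ [0,T]. -/

import Mathlib

/-- Relative-degree-one Control Barrier Function theorem (classical CBF case of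
Theorem 1 of the paper), for the closed-loop vector field `F`.  If
`⟨∇b(x), F(x)⟩ + α(b(x)) ≥ 0` everywhere, where `α` is a locally Lipschitz class K
function, then the set `C = {x | b x ≥ 0}` is forward invariant: along every
solution of `ẋ = F(x)` on `[0, T]` starting with `b (x 0) ≥ 0` we have
`b (x t) ≥ 0` for all `t ∈ [0, T]`. -/
theorem cbf_set_forward_invariance
    (n : ℕ)
    (F : EuclideanSpace ℝ (Fin n) → EuclideanSpace ℝ (Fin n))
    (hF : LocallyLipschitz F)
    (b : EuclideanSpace ℝ (Fin n) → ℝ) (hb : ContDiff ℝ 1 b)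
    (α : ℝ → ℝ) (hα_lip : LocallyLipschitz α) (hα_mono : StrictMono α)
    (hα_zero : α 0 = 0)
    (hcbf : ∀ x : EuclideanSpace ℝ (Fin n),
      inner ℝ (gradient b x) (F x) + α (b x) ≥ (0 : ℝ))
    (T : ℝ) (x : ℝ → EuclideanSpace ℝ (Fin n))
    (hsol : ∀ t ∈ Set.Icc (0 : ℝ) T, HasDerivAt x (F (x t)) t)
    (h0 : b (x 0) ≥ 0) :
    ∀ t ∈ Set.Icc (0 : ℝ) T, b (x t) ≥ 0 := by
  -- the scalar function along the trajectory
  set h : ℝ → ℝ := fun t => b (x t) with hh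
  -- derivative of `h` along the trajectory
  have hder : ∀ t ∈ Set.Icc (0 : ℝ) T,
      HasDerivAt h (inner ℝ (gradient b (x t)) (F (x t)) : ℝ) t := by
    intro t ht
    have hbd : HasFDerivAt b (fderiv ℝ b (x t)) (x t) :=
      (hb.differentiable one_ne_zero (x t)).hasFDerivAt
    have := hbd.comp_hasDerivAt t (hsol t ht)
    have hinner : (inner ℝ (gradient b (x t)) (F (x t)) : ℝ) = fderiv ℝ b (x t) (F (x t)) := by
      simp [gradient, InnerProductSpace.toDual_symm_apply]
    rw [hinner]
    exact this
  have hcont : ∀ t ∈ Set.Icc (0 : ℝ) T, ContinuousAt h t := fun t ht => (hder t ht).continuousAt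
  -- suppose not
  by_contra hcon
  push_neg at hcon
  obtain ⟨t₁, ht₁, hneg⟩ := hcon
  have ht₁0 : (0 : ℝ) ≤ t₁ := ht₁.1
  have ht₁T : t₁ ≤ T := ht₁.2
  -- last time before t₁ where h ≥ 0
  set S : Set ℝ := {t | t ∈ Set.Icc (0 : ℝ) t₁ ∧ h t ≥ 0} with hS
  have hsub : Set.Icc (0 : ℝ) t₁ ⊆ Set.Icc (0 : ℝ) T := Set.Icc_subset_Icc le_rfl ht₁T
  have hScl : IsClosed S := by
    have hcont' : ContinuousOn h (Set.Icc (0 : ℝ) t₁) := fun t ht =>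
      (hcont t (hsub ht)).continuousWithinAt
    have : S = Set.Icc (0 : ℝ) t₁ ∩ h ⁻¹' Set.Ici 0 := by
      ext t
      simp only [hS, Set.mem_setOf_eq, Set.mem_inter_iff, Set.mem_preimage, Set.mem_Ici, ge_iff_le]
    rw [this]
    exact hcont'.preimage_isClosed_of_isClosed isClosed_Icc isClosed_Ici
  have h0S : (0 : ℝ) ∈ S := ⟨⟨le_rfl, ht₁0⟩, h0⟩
  have hSne : S.Nonempty := ⟨0, h0S⟩
  have hSbdd : BddAbove S := ⟨t₁, fun t ht => ht.1.2⟩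
  set t₀ : ℝ := sSup S with ht₀def
  have ht₀S : t₀ ∈ S := hScl.csSup_mem hSne hSbdd
  have ht₀0 : (0 : ℝ) ≤ t₀ := ht₀S.1.1
  have ht₀t₁ : t₀ ≤ t₁ := ht₀S.1.2
  have ht₀nonneg : h t₀ ≥ 0 := ht₀S.2
  have ht₀lt : t₀ < t₁ := by
    rcases lt_or_eq_of_le ht₀t₁ with h' | h'
    · exact h'
    · exact absurd (h' ▸ ht₀nonneg) (not_le.mpr hneg)
  -- beyond t₀, h is negative
  have hafter : ∀ t, t₀ < t → t ≤ t₁ → h t < 0 := by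
    intro t hlt hle
    by_contra hge
    push_neg at hge
    have : t ∈ S := ⟨⟨le_trans ht₀0 hlt.le, hle⟩, hge⟩
    exact absurd (le_csSup hSbdd this) (not_le.mpr hlt)
  -- hence h t₀ ≤ 0 by continuity from the right
  have ht₀zero : h t₀ = 0 := by
    rcases lt_or_eq_of_le ht₀nonneg with hpos | heq
    · exfalso
      have hctn : ContinuousAt h t₀ := hcont t₀ (hsub ⟨ht₀0, ht₀t₁⟩)
      have hev : ∀ᶠ t in nhds t₀, 0 < h t := continuousAt_const.eventually_lt hctn hpos
      have hmem : Set.Ioc t₀ t₁ ∈ nhdsWithin t₀ (Set.Ioi t₀) :=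
        Ioc_mem_nhdsGT_of_mem ⟨le_rfl, ht₀lt⟩
      have : ∀ᶠ t in nhdsWithin t₀ (Set.Ioi t₀), 0 < h t :=
        (hev.filter_mono nhdsWithin_le_nhds)
      obtain ⟨t, htpos, htIoc⟩ := (this.and (Filter.eventually_of_mem hmem (fun _ ht => ht))).exists
      exact absurd (hafter t htIoc.1 htIoc.2) (not_lt.mpr htpos.le)
    · exact heq.symm
  -- on [t₀, t₁], h ≤ 0, hence the derivative of h is ≥ 0 there
  have hhle : ∀ t ∈ Set.Icc t₀ t₁, h t ≤ 0 := by
    intro t ht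
    rcases eq_or_lt_of_le ht.1 with h' | h'
    · rw [← h']; exact le_of_eq ht₀zero
    · exact (hafter t h' ht.2).le
  have hsub' : Set.Icc t₀ t₁ ⊆ Set.Icc (0 : ℝ) T := Set.Icc_subset_Icc ht₀0 ht₁T
  have hderiv_nonneg : ∀ t ∈ Set.Icc t₀ t₁, 0 ≤ deriv h t := by
    intro t ht
    have hd := hder t (hsub' ht)
    rw [hd.deriv]
    have hα : α (h t) ≤ 0 := by
      calc α (h t) ≤ α 0 := hα_mono.monotone (hhle t ht)
        _ = 0 := hα_zero
    have := hcbf (x t)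
    linarith
  -- h is monotone on [t₀, t₁]
  have hmono : MonotoneOn h (Set.Icc t₀ t₁) := by
    apply monotoneOn_of_deriv_nonneg (convex_Icc t₀ t₁)
    · exact fun t ht => (hcont t (hsub' ht)).continuousWithinAt
    · intro t ht
      have ht' : t ∈ Set.Icc t₀ t₁ := interior_subset ht
      exact ((hder t (hsub' ht')).differentiableAt).differentiableWithinAt
    · intro t ht
      exact hderiv_nonneg t (interior_subset ht)
  have : h t₀ ≤ h t₁ := hmono ⟨le_rfl, ht₀t₁⟩ ⟨ht₀t₁, le_rfl⟩ ht₀t₁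
  rw [ht₀zero] at this
  exact absurd (lt_of_le_of_lt this hneg) (lt_irrefl 0)
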